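/- Let (X,G) be a dynamical system and H an almost normal subgroup of G. If the set X_H = {x ∈ X : G_x = gHg⁻¹ for some g ∈ G} is dense in X, then X_H is exactly the set of points of X with trivial holonomy, i.e., X_H = {x ∈ X : every g ∈ G_x fixes pointwise some open neighborhood of x}. -/

import Mathlib

/-- The conjugate subgroup `g H g⁻¹`. -/
def conjSubgroup {G : Type*} [Group G] (g : G) (H : Subgroup G) : Subgroup G :=
  Subgroup.map (MulAut.conj g).toMonoidHom H

/-- The set `X_H` of points of `X` whose stabilizer is conjugate to `H`. -/
def setXH (G : Type*) {X : Type*} [Group G] [MulAction G X] (H : Subgroup G) : Set X :=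
  {x : X | ∃ g : G, MulAction.stabilizer G x = conjSubgroup g H}

/-- A point `x` has trivial holonomy if every element of its stabilizer fixes pointwise
some open neighborhood of `x`. -/
def TrivialHolonomy (G : Type*) {X : Type*} [Group G] [TopologicalSpace X] [MulAction G X]
    (x : X) : Prop :=
  ∀ g ∈ MulAction.stabilizer G x, ∃ U : Set X, IsOpen U ∧ x ∈ U ∧ ∀ y ∈ U, g • y = y

section Aux

variable {G : Type*} [Group G]

lemma mem_conjSubgroup {a x : G} {H : Subgroup G} :
    x ∈ conjSubgroup a H ↔ a⁻¹ * x * a ∈ H := by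
  simp only [conjSubgroup, Subgroup.mem_map, MulEquiv.coe_toMonoidHom, MulAut.conj_apply]
  constructor
  · rintro ⟨h, hh, rfl⟩
    have : a⁻¹ * (a * h * a⁻¹) * a = h := by group
    rwa [this]
  · intro h
    exact ⟨_, h, by group⟩

lemma conjSubgroup_one (H : Subgroup G) : conjSubgroup 1 H = H := by
  ext x; simp [mem_conjSubgroup]

lemma conjSubgroup_conjSubgroup (a b : G) (H : Subgroup G) :
    conjSubgroup a (conjSubgroup b H) = conjSubgroup (a * b) H := by
  ext x
  simp only [mem_conjSubgroup]
  have : b⁻¹ * (a⁻¹ * x * a) * b = (a * b)⁻¹ * x * (a * b) := by group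
  rw [this]

lemma conjSubgroup_mono (a : G) {H K : Subgroup G} (h : H ≤ K) :
    conjSubgroup a H ≤ conjSubgroup a K := by
  intro x hx
  rw [mem_conjSubgroup] at hx ⊢
  exact h hx

lemma conjSubgroup_eq_of_mem_normalizer {a : G} {H : Subgroup G} (ha : a ∈ (Subgroup.normalizer (H : Set G))) :
    conjSubgroup a H = H := by
  rw [Subgroup.mem_normalizer_iff] at ha
  ext x
  rw [mem_conjSubgroup]
  have hxx : a * (a⁻¹ * x * a) * a⁻¹ = x := by group
  have key := ha (a⁻¹ * x * a)
  rw [hxx] at key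
  exact key

lemma conjSubgroup_pow_le {a : G} {H : Subgroup G} (h : conjSubgroup a H ≤ H) :
    ∀ n : ℕ, conjSubgroup (a ^ n) H ≤ H := by
  intro n
  induction n with
  | zero => rw [pow_zero, conjSubgroup_one]
  | succ n ih =>
      have : conjSubgroup (a ^ (n + 1)) H = conjSubgroup a (conjSubgroup (a ^ n) H) := by
        rw [conjSubgroup_conjSubgroup, ← pow_succ']
      rw [this]
      exact le_trans (conjSubgroup_mono a ih) h

lemma exists_pow_mem_normalizer {H : Subgroup G} (hAN : (Subgroup.normalizer (H : Set G)).FiniteIndex) (a : G) :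
    ∃ m : ℕ, 0 < m ∧ a ^ m ∈ (Subgroup.normalizer (H : Set G)) := by
  haveI : Finite (G ⧸ (Subgroup.normalizer (H : Set G))) := (Subgroup.normalizer (H : Set G)).finite_quotient_of_finiteIndex
  obtain ⟨i, j, hne, heq⟩ :=
    Finite.exists_ne_map_eq_of_infinite (fun n : ℕ => ((a ^ n : G) : G ⧸ (Subgroup.normalizer (H : Set G))))
  rcases hne.lt_or_gt with hij | hij
  · refine ⟨j - i, Nat.sub_pos_of_lt hij, ?_⟩
    have h1 : (a ^ i)⁻¹ * a ^ j ∈ (Subgroup.normalizer (H : Set G)) := (QuotientGroup.eq).mp heq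
    have h2 : a ^ (j - i) = (a ^ i)⁻¹ * a ^ j := by
      rw [eq_inv_mul_iff_mul_eq, ← pow_add, Nat.add_sub_cancel' hij.le]
    rwa [h2]
  · refine ⟨i - j, Nat.sub_pos_of_lt hij, ?_⟩
    have h1 : (a ^ j)⁻¹ * a ^ i ∈ (Subgroup.normalizer (H : Set G)) := (QuotientGroup.eq).mp heq.symm
    have h2 : a ^ (i - j) = (a ^ j)⁻¹ * a ^ i := by
      rw [eq_inv_mul_iff_mul_eq, ← pow_add, Nat.add_sub_cancel' hij.le]
    rwa [h2]

lemma conjSubgroup_eq_of_le_self {a : G} {H : Subgroup G} (hAN : (Subgroup.normalizer (H : Set G)).FiniteIndex)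
    (h : conjSubgroup a H ≤ H) : conjSubgroup a H = H := by
  obtain ⟨m, hm, hmem⟩ := exists_pow_mem_normalizer hAN a
  refine le_antisymm h ?_
  have hH : conjSubgroup (a ^ m) H = H := conjSubgroup_eq_of_mem_normalizer hmem
  obtain ⟨k, rfl⟩ : ∃ k, m = k + 1 := ⟨m - 1, (Nat.succ_pred_eq_of_pos hm).symm⟩
  calc H = conjSubgroup (a ^ (k + 1)) H := hH.symm
    _ = conjSubgroup a (conjSubgroup (a ^ k) H) := by
        rw [conjSubgroup_conjSubgroup, ← pow_succ']
    _ ≤ conjSubgroup a H := conjSubgroup_mono a (conjSubgroup_pow_le h k)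

lemma conjSubgroup_eq_of_le {g g' : G} {H : Subgroup G} (hAN : (Subgroup.normalizer (H : Set G)).FiniteIndex)
    (h : conjSubgroup g H ≤ conjSubgroup g' H) : conjSubgroup g H = conjSubgroup g' H := by
  have h2 : conjSubgroup (g'⁻¹ * g) H ≤ H := by
    have := conjSubgroup_mono g'⁻¹ h
    rwa [conjSubgroup_conjSubgroup, conjSubgroup_conjSubgroup, inv_mul_cancel,
      conjSubgroup_one] at this
  have h3 := conjSubgroup_eq_of_le_self hAN h2
  have h4 := congrArg (conjSubgroup g') h3
  rwa [conjSubgroup_conjSubgroup, mul_inv_cancel_left] at h4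

lemma finite_range_conjSubgroup {H : Subgroup G} (hAN : (Subgroup.normalizer (H : Set G)).FiniteIndex) :
    (Set.range fun g : G => conjSubgroup g H).Finite := by
  haveI : Finite (G ⧸ (Subgroup.normalizer (H : Set G))) := (Subgroup.normalizer (H : Set G)).finite_quotient_of_finiteIndex
  have hcompat : ∀ a b : G, (QuotientGroup.leftRel (Subgroup.normalizer (H : Set G))) a b →
      conjSubgroup a H = conjSubgroup b H := by
    intro a b hab
    rw [QuotientGroup.leftRel_apply] at hab
    have h3 := conjSubgroup_eq_of_mem_normalizer hab
    have h4 := congrArg (conjSubgroup a) h3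
    rw [conjSubgroup_conjSubgroup, mul_inv_cancel_left] at h4
    exact h4.symm
  let q : G ⧸ (Subgroup.normalizer (H : Set G)) → Subgroup G := Quotient.lift (fun g => conjSubgroup g H) hcompat
  have hsub : (Set.range fun g : G => conjSubgroup g H) ⊆ Set.range q := by
    rintro K ⟨g, rfl⟩
    exact ⟨QuotientGroup.mk g, rfl⟩
  exact (Set.finite_range q).subset hsub

end Aux

/-- Let `(X,G)` be a dynamical system and `H` an almost normal subgroup of `G`. If `X_H` is dense
in `X`, then `X_H` is exactly the set of points of `X` with trivial holonomy. -/
theorem stmt3 {G X : Type*} [Group G] [Countable G]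
    [TopologicalSpace X] [CompactSpace X] [T2Space X]
    [MulAction G X] [ContinuousConstSMul G X]
    (H : Subgroup G) (hAN : (Subgroup.normalizer (H : Set G)).FiniteIndex)
    (hdense : Dense (setXH G H : Set X)) :
    setXH G H = {x : X | TrivialHolonomy G x} := by
  classical
  have hKsfin : (Set.range fun g : G => conjSubgroup g H).Finite :=
    finite_range_conjSubgroup hAN
  set Ks : Set (Subgroup G) := Set.range fun g : G => conjSubgroup g H with hKsdef
  set C : Subgroup G → Set X := fun K => closure {y : X | MulAction.stabilizer G y = K}
    with hCdef
  have hfix : ∀ K : Subgroup G, ∀ k ∈ K, ∀ y ∈ C K, k • y = y := by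
    intro K k hk y hy
    have hc : IsClosed {y : X | k • y = y} :=
      isClosed_eq (continuous_const_smul k) continuous_id
    have hsub : {y : X | MulAction.stabilizer G y = K} ⊆ {y : X | k • y = y} := by
      intro z hz
      have : k ∈ MulAction.stabilizer G z := by rw [hz]; exact hk
      exact this
    exact closure_minimal hsub hc hy
  have hcover : ∀ x : X, ∃ K ∈ Ks, x ∈ C K := by
    have hclosed : IsClosed (⋃ K ∈ Ks, C K) :=
      hKsfin.isClosed_biUnion fun K _ => isClosed_closure
    have hsub : (setXH G H : Set X) ⊆ ⋃ K ∈ Ks, C K := by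
      rintro x ⟨g, hg⟩
      exact Set.mem_biUnion ⟨g, rfl⟩ (subset_closure hg)
    intro x
    have hx : x ∈ ⋃ K ∈ Ks, C K := by
      have h1 := closure_minimal hsub hclosed
      have h2 : closure (setXH G H : Set X) = Set.univ := hdense.closure_eq
      exact h1 (h2 ▸ Set.mem_univ x)
    simpa using hx
  ext x
  constructor
  · rintro ⟨g, hg⟩
    intro s hs
    set Bad : Set (Subgroup G) := {K ∈ Ks | x ∉ C K} with hBaddef
    have hBadfin : Bad.Finite := hKsfin.subset fun K hK => hK.1
    have hBclosed : IsClosed (⋃ K ∈ Bad, C K) :=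
      hBadfin.isClosed_biUnion fun K _ => isClosed_closure
    refine ⟨(⋃ K ∈ Bad, C K)ᶜ, hBclosed.isOpen_compl, ?_, ?_⟩
    · intro hxmem
      simp only [Set.mem_iUnion] at hxmem
      obtain ⟨K, hK, hxK⟩ := hxmem
      exact hK.2 hxK
    · intro y hy
      obtain ⟨K, hKs, hyK⟩ := hcover y
      have hxK : x ∈ C K := by
        by_contra hx
        exact hy (Set.mem_biUnion ⟨hKs, hx⟩ hyK)
      have hKle : K ≤ MulAction.stabilizer G x := fun k hk => hfix K k hk x hxK
      obtain ⟨g', rfl⟩ := hKs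
      rw [hg] at hKle
      have heq : conjSubgroup g' H = conjSubgroup g H := conjSubgroup_eq_of_le hAN hKle
      have hsK : s ∈ conjSubgroup g' H := by
        rw [heq, ← hg]; exact hs
      exact hfix _ s hsK y hyK
  · intro hx
    obtain ⟨K, hKs, hxK⟩ := hcover x
    obtain ⟨g, rfl⟩ := hKs
    refine ⟨g, le_antisymm ?_ ?_⟩
    · intro s hs
      obtain ⟨U, hUo, hxU, hUfix⟩ := hx s hs
      obtain ⟨y, hyU, hyS⟩ := mem_closure_iff.mp hxK U hUo hxU
      have hsy : s ∈ MulAction.stabilizer G y := hUfix y hyU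
      rw [hyS] at hsy
      exact hsy
    · intro k hk
      exact hfix _ k hk x hxK
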